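/- Discrete analogue of Proposition 3.2: in a discrete structural equation model, assume that for every topological order π of G, every m ∈ [d], and all i, j ∈ π[1:m] such that i is a sink of G^{π[1:m]} while j is not, one has I(V_j ; (V_l)_{l∈Des_j^{π[1:m]}} | (V_l)_{l∈W_j^{π[1:m]}}) > H(ε_j) − H(ε_i). Then for every topological order π of G and every m ∈ [d]: (a) for all i, j ∈ π[1:m] with i a sink of G^{π[1:m]} and j not a sink of G^{π[1:m]}, H(V_i | (V_l)_{l∈π[1:m], l≠i}) > H(V_j | (V_l)_{l∈π[1:m], l≠j}); consequently, (b) every i* ∈ π[1:m] maximizing i ↦ H(V_i | (V_l)_{l∈π[1:m], l≠i}) over π[1:m] is a sink of G^{π[1:m]}. -/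

import Mathlib

open MeasureTheory

attribute [local instance] Classical.propDecidable

/-- Shannon entropy of a finite-valued random variable. -/
noncomputable def entropy {Ω : Type*} [MeasurableSpace Ω] (P : Measure Ω)
    {T : Type*} [Fintype T] (X : Ω → T) : ℝ :=
  ∑ x : T, Real.negMulLog ((P (X ⁻¹' {x})).toReal)

/-- Conditional entropy H(Y|X) := H(X,Y) − H(X). -/
noncomputable def condEntropy {Ω : Type*} [MeasurableSpace Ω] (P : Measure Ω)
    {S T : Type*} [Fintype S] [Fintype T] (X : Ω → S) (Y : Ω → T) : ℝ :=
  entropy P (fun ω => (X ω, Y ω)) - entropy P X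

/-- Conditional mutual information I(Y;Z|X) := H(Y|X) − H(Y|X,Z). -/
noncomputable def condMutualInfo {Ω : Type*} [MeasurableSpace Ω] (P : Measure Ω)
    {S T U : Type*} [Fintype S] [Fintype T] [Fintype U]
    (X : Ω → S) (Y : Ω → T) (Z : Ω → U) : ℝ :=
  condEntropy P X Y - condEntropy P (fun ω => (X ω, Z ω)) Y

/-- Entropy is invariant under post-composition with an injective map. -/
lemma entropy_comp_injective {Ω : Type*} [MeasurableSpace Ω] (P : Measure Ω)
    {S T : Type*} [Fintype S] [Fintype T] (X : Ω → S) (g : S → T)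
    (hg : Function.Injective g) :
    entropy P (fun ω => g (X ω)) = entropy P X := by
  unfold entropy
  symm
  calc ∑ s : S, Real.negMulLog ((P (X ⁻¹' {s})).toReal)
      = ∑ t ∈ Finset.univ.image g,
          Real.negMulLog ((P ((fun ω => g (X ω)) ⁻¹' {t})).toReal) := by
        rw [Finset.sum_image (fun a _ b _ h => hg h)]
        refine Finset.sum_congr rfl fun s _ => ?_
        have h0 : (fun ω => g (X ω)) ⁻¹' {g s} = X ⁻¹' {s} := by
          ext ω; simp [hg.eq_iff]
        rw [h0]
    _ = ∑ t : T, Real.negMulLog ((P ((fun ω => g (X ω)) ⁻¹' {t})).toReal) := by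
        refine Finset.sum_subset (Finset.subset_univ _) fun t _ ht => ?_
        have h0 : (fun ω => g (X ω)) ⁻¹' {t} = ∅ := by
          ext ω
          simp only [Set.mem_preimage, Set.mem_singleton_iff, Set.mem_empty_iff_false,
            iff_false]
          intro h
          exact ht (Finset.mem_image.mpr ⟨X ω, Finset.mem_univ _, h⟩)
        simp [h0]

/-- Conditional entropy is invariant under post-composition of the conditioning
variable with an injective map. -/
lemma condEntropy_comp_injective {Ω : Type*} [MeasurableSpace Ω] (P : Measure Ω)
    {S S' T : Type*} [Fintype S] [Fintype S'] [Fintype T]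
    (X : Ω → S) (Y : Ω → T) (g : S → S') (hg : Function.Injective g) :
    condEntropy P (fun ω => g (X ω)) Y = condEntropy P X Y := by
  have hg2 : Function.Injective (fun p : S × T => (g p.1, p.2)) := by
    rintro ⟨a, b⟩ ⟨c, e⟩ h
    simp only [Prod.mk.injEq] at h ⊢
    exact ⟨hg h.1, h.2⟩
  have h1 := entropy_comp_injective P X g hg
  have h2 := entropy_comp_injective P (fun ω => (X ω, Y ω))
    (fun p : S × T => (g p.1, p.2)) hg2
  unfold condEntropy
  rw [h1]
  rw [show (fun ω => (g (X ω), Y ω))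
      = (fun ω => (fun p : S × T => (g p.1, p.2)) ((fun ω' => (X ω', Y ω')) ω)) from rfl]
  rw [h2]

lemma sum_toReal_eq_one {Ω : Type*} [MeasurableSpace Ω] (P : Measure Ω)
    [IsProbabilityMeasure P] {S : Type*} [Fintype S] (X : Ω → S)
    (hX : ∀ s : S, MeasurableSet (X ⁻¹' {s})) :
    ∑ s : S, (P (X ⁻¹' {s})).toReal = 1 := by
  have h := sum_measure_preimage_singleton (μ := P) (Finset.univ : Finset S)
    (fun y _ => hX y)
  rw [← ENNReal.toReal_sum (fun a _ => measure_ne_top P _)]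
  rw [h]
  simp

/-- Entropy of a pair of independent random variables is the sum of the
entropies. -/
lemma entropy_pair_of_indep {Ω : Type*} [MeasurableSpace Ω] (P : Measure Ω)
    [IsProbabilityMeasure P] {S T : Type*} [Fintype S] [Fintype T]
    [MeasurableSpace S] [MeasurableSpace T]
    [MeasurableSingletonClass S] [MeasurableSingletonClass T]
    (X : Ω → S) (Y : Ω → T) (hX : Measurable X) (hY : Measurable Y)
    (h : ProbabilityTheory.IndepFun X Y P) :
    entropy P (fun ω => (X ω, Y ω)) = entropy P X + entropy P Y := by
  have key : ∀ s t, (P ((fun ω => (X ω, Y ω)) ⁻¹' {(s, t)})).toReal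
      = (P (X ⁻¹' {s})).toReal * (P (Y ⁻¹' {t})).toReal := by
    intro s t
    have h0 : (fun ω => (X ω, Y ω)) ⁻¹' {(s, t)} = X ⁻¹' {s} ∩ Y ⁻¹' {t} := by
      ext ω; simp [Prod.ext_iff]
    rw [h0, h.measure_inter_preimage_eq_mul _ _ (measurableSet_singleton s)
      (measurableSet_singleton t), ENNReal.toReal_mul]
  have hp : ∑ s : S, (P (X ⁻¹' {s})).toReal = 1 :=
    sum_toReal_eq_one P X fun s => hX (measurableSet_singleton s)
  have hq : ∑ t : T, (P (Y ⁻¹' {t})).toReal = 1 :=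
    sum_toReal_eq_one P Y fun t => hY (measurableSet_singleton t)
  unfold entropy
  rw [Fintype.sum_prod_type]
  calc ∑ s : S, ∑ t : T, Real.negMulLog ((P ((fun ω => (X ω, Y ω)) ⁻¹' {(s, t)})).toReal)
      = ∑ s : S, ∑ t : T, ((P (Y ⁻¹' {t})).toReal
            * Real.negMulLog ((P (X ⁻¹' {s})).toReal)
          + (P (X ⁻¹' {s})).toReal * Real.negMulLog ((P (Y ⁻¹' {t})).toReal)) := by
        refine Finset.sum_congr rfl fun s _ => Finset.sum_congr rfl fun t _ => ?_
        rw [key, Real.negMulLog_mul]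
    _ = ∑ s : S, (Real.negMulLog ((P (X ⁻¹' {s})).toReal)
          + (P (X ⁻¹' {s})).toReal * ∑ t : T, Real.negMulLog ((P (Y ⁻¹' {t})).toReal)) := by
        refine Finset.sum_congr rfl fun s _ => ?_
        rw [Finset.sum_add_distrib, ← Finset.sum_mul, hq, one_mul, ← Finset.mul_sum]
    _ = _ := by
        rw [Finset.sum_add_distrib, ← Finset.sum_mul, hp, one_mul]

/-- In a structural equation model each variable is a function of the noises at
it and its ancestors. -/
lemma factor_node {d : ℕ} {E : Fin d → Fin d → Prop} {Ω A : Type*} [AddCommGroup A]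
    (π : Equiv.Perm (Fin d)) (hπ : ∀ a b, Relation.TransGen E a b → π.symm a < π.symm b)
    (f : (i : Fin d) → ({j : Fin d // E j i} → A) → A) (ε V : Fin d → Ω → A)
    (hV : ∀ i ω, V i ω = f i (fun j => V j.1 ω) + ε i ω)
    (K : Finset (Fin d)) :
    ∀ n : ℕ, ∀ l : Fin d, (π.symm l : ℕ) < n → l ∈ K →
      (∀ p, Relation.TransGen E p l → p ∈ K) →
      ∃ g : ({k : Fin d // k ∈ K} → A) → A, ∀ ω, V l ω = g (fun k => ε k.1 ω) := by
  intro n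
  induction n with
  | zero => intro l h; omega
  | succ n ih =>
    intro l hln hlK hanc
    have hpar : ∀ p : {p : Fin d // E p l},
        ∃ g : ({k : Fin d // k ∈ K} → A) → A, ∀ ω, V p.1 ω = g (fun k => ε k.1 ω) := by
      intro p
      refine ih p.1 ?_ (hanc p.1 (Relation.TransGen.single p.2))
        (fun q hq => hanc q (hq.tail p.2))
      have h1 : (π.symm p.1 : ℕ) < (π.symm l : ℕ) := hπ p.1 l (Relation.TransGen.single p.2)
      omega
    choose gs hgs using hpar
    refine ⟨fun e => f l (fun p => gs p e) + e ⟨l, hlK⟩, fun ω => ?_⟩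
    rw [hV l ω]
    congr 1
    congr 1
    funext p
    exact hgs p ω

/-- If the conditioning set `Q` contains all parents of `i`, does not contain
`i`, and contains no descendant of `i`, then `H(V_i | (V_l)_{l ∈ Q}) = H(ε_i)`. -/
lemma condEntropy_eq_noise {d : ℕ} {E : Fin d → Fin d → Prop}
    {Ω A : Type*} [MeasurableSpace Ω] (P : Measure Ω) [IsProbabilityMeasure P]
    [Fintype A] [AddCommGroup A] [MeasurableSpace A] [MeasurableSingletonClass A]
    (π : Equiv.Perm (Fin d)) (hπ : ∀ a b, Relation.TransGen E a b → π.symm a < π.symm b)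
    (ε : Fin d → Ω → A) (hεmeas : ∀ i, Measurable (ε i))
    (hindep : ProbabilityTheory.iIndepFun ε P)
    (f : (i : Fin d) → ({j : Fin d // E j i} → A) → A)
    (V : Fin d → Ω → A) (hVmeas : ∀ i, Measurable (V i))
    (hV : ∀ i ω, V i ω = f i (fun j => V j.1 ω) + ε i ω)
    (Q : Fin d → Prop) (i : Fin d) [Fintype {l : Fin d // Q l}]
    (hpar : ∀ p, E p i → Q p) (hQi : ¬ Q i)
    (hanc2 : ∀ l, Q l → ∀ p, Relation.TransGen E p l → p ≠ i) :
    condEntropy P (fun ω => fun l : {l : Fin d // Q l} => V l.1 ω) (V i)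
      = entropy P (ε i) := by
  classical
  set K : Finset (Fin d) := Finset.univ.filter
    (fun k => k ≠ i ∧ (Q k ∨ ∃ l, Q l ∧ Relation.TransGen E k l)) with hK
  have hfac : ∀ l : {l : Fin d // Q l},
      ∃ g : ({k : Fin d // k ∈ K} → A) → A, ∀ ω, V l.1 ω = g (fun k => ε k.1 ω) := by
    intro l
    refine factor_node π hπ f ε V hV K d l.1 (π.symm l.1).isLt ?_ ?_
    · simp only [hK, Finset.mem_filter, Finset.mem_univ, true_and]
      exact ⟨fun h => hQi (h ▸ l.2), Or.inl l.2⟩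
    · intro p hp
      simp only [hK, Finset.mem_filter, Finset.mem_univ, true_and]
      exact ⟨hanc2 l.1 l.2 p hp, Or.inr ⟨l.1, l.2, hp⟩⟩
  choose gs hgs using hfac
  set X : Ω → ({l : Fin d // Q l} → A) := fun ω => fun l => V l.1 ω with hXdef
  set G : ({k : Fin d // k ∈ K} → A) → ({l : Fin d // Q l} → A) := fun e l => gs l e
    with hGdef
  have hGX : X = fun ω => G (fun k => ε k.1 ω) := by
    funext ω
    funext l
    exact hgs l ω
  have hiK : i ∉ K := by simp [hK]
  have hdisj : Disjoint K ({i} : Finset (Fin d)) := by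
    simp [Finset.disjoint_singleton_right, hiK]
  have h0 := hindep.indepFun_finset K {i} hdisj hεmeas
  have h2 := h0.comp (φ := G)
    (ψ := fun v : ({k : Fin d // k ∈ ({i} : Finset (Fin d))} → A) =>
      v ⟨i, Finset.mem_singleton_self i⟩)
    Measurable.of_discrete (measurable_pi_apply _ : Measurable
      fun v : ({k : Fin d // k ∈ ({i} : Finset (Fin d))} → A) => v ⟨i, Finset.mem_singleton_self i⟩)
  have h3 : ProbabilityTheory.IndepFun X (ε i) P := by
    rw [hGX]
    exact h2
  have hXmeas : Measurable X := measurable_pi_iff.mpr fun l => hVmeas l.1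
  have hpair : entropy P (fun ω => (X ω, ε i ω)) = entropy P X + entropy P (ε i) :=
    entropy_pair_of_indep P X (ε i) hXmeas (hεmeas i) h3
  have hginj : Function.Injective
      (fun va : ({l : Fin d // Q l} → A) × A =>
        (va.1, f i (fun p : {p : Fin d // E p i} => va.1 ⟨p.1, hpar p.1 p.2⟩) + va.2)) := by
    rintro ⟨v, a⟩ ⟨v', a'⟩ h
    have h1 : v = v' := congrArg Prod.fst h
    subst h1
    have h2' := congrArg Prod.snd h
    simp only at h2'
    exact Prod.ext rfl (add_left_cancel h2')
  have hbij : entropy P (fun ω => (X ω, V i ω)) = entropy P (fun ω => (X ω, ε i ω)) := by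
    have h4 := entropy_comp_injective P (fun ω => (X ω, ε i ω)) _ hginj
    rw [← h4]
    congr 1
    funext ω
    simp only
    exact congrArg (fun z => (X ω, z)) (hV i ω)
  show entropy P (fun ω => (X ω, V i ω)) - entropy P X = entropy P (ε i)
  rw [hbij, hpair]
  ring

theorem stmt11 {d : ℕ} (E : Fin d → Fin d → Prop)
    (hacyc : ∀ i, ¬ Relation.TransGen E i i)
    {Ω A : Type*} [MeasurableSpace Ω] (P : Measure Ω) [IsProbabilityMeasure P]
    [Fintype A] [AddCommGroup A] [MeasurableSpace A] [MeasurableSingletonClass A]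
    (ε : Fin d → Ω → A) (hεmeas : ∀ i, Measurable (ε i))
    (hindep : ProbabilityTheory.iIndepFun ε P)
    (f : (i : Fin d) → ({j : Fin d // E j i} → A) → A)
    (V : Fin d → Ω → A) (hVmeas : ∀ i, Measurable (V i))
    (hV : ∀ i ω, V i ω = f i (fun j => V j.1 ω) + ε i ω)
    (hyp : ∀ σ : Equiv.Perm (Fin d),
      (∀ a b, Relation.TransGen E a b → σ.symm a < σ.symm b) →
      ∀ m : Fin d, ∀ i j : Fin d, σ.symm i ≤ m → σ.symm j ≤ m →
        (∀ l, σ.symm l ≤ m → ¬ E i l) →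
        (∃ l, σ.symm l ≤ m ∧ E j l) →
        entropy P (ε j) - entropy P (ε i)
          < condMutualInfo P
              (fun ω =>
                fun l : {l : Fin d // (σ.symm l ≤ m ∧ l ≠ j) ∧ ¬ Relation.TransGen E j l} =>
                  V l.1 ω)
              (V j)
              (fun ω => fun l : {l : Fin d // σ.symm l ≤ m ∧ Relation.TransGen E j l} =>
                V l.1 ω))
    :
    ∀ π : Equiv.Perm (Fin d),
      (∀ a b, Relation.TransGen E a b → π.symm a < π.symm b) →
      ∀ m : Fin d,
        (∀ i j : Fin d, π.symm i ≤ m → π.symm j ≤ m →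
          (∀ l, π.symm l ≤ m → ¬ E i l) →
          (∃ l, π.symm l ≤ m ∧ E j l) →
          condEntropy P (fun ω => fun l : {l : Fin d // π.symm l ≤ m ∧ l ≠ j} => V l.1 ω) (V j)
            < condEntropy P (fun ω => fun l : {l : Fin d // π.symm l ≤ m ∧ l ≠ i} => V l.1 ω)
                (V i))
        ∧ (∀ istar : Fin d, π.symm istar ≤ m →
            (∀ i : Fin d, π.symm i ≤ m →
              condEntropy P (fun ω => fun l : {l : Fin d // π.symm l ≤ m ∧ l ≠ i} => V l.1 ω)
                  (V i)
                ≤ condEntropy P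
                    (fun ω => fun l : {l : Fin d // π.symm l ≤ m ∧ l ≠ istar} => V l.1 ω)
                    (V istar)) →
            ∀ l, π.symm l ≤ m → ¬ E istar l) := by
  intro π hπ m
  have sinkNoDesc : ∀ i : Fin d, (∀ l, π.symm l ≤ m → ¬ E i l) →
      ∀ l, Relation.TransGen E i l → π.symm l ≤ m → False := by
    intro i hsink l hTG
    induction hTG with
    | single h => exact fun hl => hsink _ hl h
    | tail hTG hE ih =>
      intro hl
      exact ih (le_trans (le_of_lt (hπ _ _ (Relation.TransGen.single hE))) hl)
  have parta : ∀ i j : Fin d, π.symm i ≤ m → π.symm j ≤ m →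
      (∀ l, π.symm l ≤ m → ¬ E i l) → (∃ l, π.symm l ≤ m ∧ E j l) →
      condEntropy P (fun ω => fun l : {l : Fin d // π.symm l ≤ m ∧ l ≠ j} => V l.1 ω) (V j)
        < condEntropy P (fun ω => fun l : {l : Fin d // π.symm l ≤ m ∧ l ≠ i} => V l.1 ω)
            (V i) := by
    intro i j hi hj hsink hnon
    have hEi : condEntropy P
        (fun ω => fun l : {l : Fin d // π.symm l ≤ m ∧ l ≠ i} => V l.1 ω) (V i)
        = entropy P (ε i) := by
      refine condEntropy_eq_noise P π hπ ε hεmeas hindep f V hVmeas hV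
        (fun l => π.symm l ≤ m ∧ l ≠ i) i ?_ ?_ ?_
      · intro p hp
        have h1 := hπ p i (Relation.TransGen.single hp)
        refine ⟨le_trans (le_of_lt h1) hi, fun h => hacyc i ?_⟩
        · rw [h] at hp; exact Relation.TransGen.single hp
      · simp
      · intro l hl p hTG hpi
        rw [hpi] at hTG
        exact sinkNoDesc i hsink l hTG hl.1
    have hEj : condEntropy P
        (fun ω =>
          fun l : {l : Fin d // (π.symm l ≤ m ∧ l ≠ j) ∧ ¬ Relation.TransGen E j l} =>
            V l.1 ω) (V j)
        = entropy P (ε j) := by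
      refine condEntropy_eq_noise P π hπ ε hεmeas hindep f V hVmeas hV
        (fun l => (π.symm l ≤ m ∧ l ≠ j) ∧ ¬ Relation.TransGen E j l) j ?_ ?_ ?_
      · intro p hp
        refine ⟨⟨le_trans (le_of_lt (hπ p j (Relation.TransGen.single hp))) hj,
          fun h => hacyc j ?_⟩, fun hTG => hacyc j (hTG.tail hp)⟩
        · rw [h] at hp; exact Relation.TransGen.single hp
      · simp
      · intro l hl p hTG hpj
        rw [hpj] at hTG
        exact hl.2 hTG
    have hDne : ∀ x : Fin d, Relation.TransGen E j x → x ≠ j := by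
      intro x hTG h
      rw [h] at hTG
      exact hacyc j hTG
    have hg2inj : Function.Injective
        (fun v : ({l : Fin d // π.symm l ≤ m ∧ l ≠ j} → A) =>
          ((fun l : {l : Fin d // (π.symm l ≤ m ∧ l ≠ j) ∧ ¬ Relation.TransGen E j l} =>
              v ⟨l.1, l.2.1⟩),
           (fun l : {l : Fin d // π.symm l ≤ m ∧ Relation.TransGen E j l} =>
              v ⟨l.1, l.2.1, hDne l.1 l.2.2⟩))) := by
      intro v v' h
      funext l
      obtain ⟨x, hx1, hx2⟩ := l
      by_cases hD : Relation.TransGen E j x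
      · exact congrFun (congrArg Prod.snd h) ⟨x, hx1, hD⟩
      · exact congrFun (congrArg Prod.fst h) ⟨x, ⟨hx1, hx2⟩, hD⟩
    have hre : condEntropy P
        (fun ω =>
          ((fun l : {l : Fin d // (π.symm l ≤ m ∧ l ≠ j) ∧ ¬ Relation.TransGen E j l} =>
              V l.1 ω),
           (fun l : {l : Fin d // π.symm l ≤ m ∧ Relation.TransGen E j l} => V l.1 ω)))
        (V j)
        = condEntropy P
            (fun ω => fun l : {l : Fin d // π.symm l ≤ m ∧ l ≠ j} => V l.1 ω) (V j) :=
      condEntropy_comp_injective P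
        (fun ω => fun l : {l : Fin d // π.symm l ≤ m ∧ l ≠ j} => V l.1 ω) (V j)
        (fun v : ({l : Fin d // π.symm l ≤ m ∧ l ≠ j} → A) =>
          ((fun l : {l : Fin d // (π.symm l ≤ m ∧ l ≠ j) ∧ ¬ Relation.TransGen E j l} =>
              v ⟨l.1, l.2.1⟩),
           (fun l : {l : Fin d // π.symm l ≤ m ∧ Relation.TransGen E j l} =>
              v ⟨l.1, l.2.1, hDne l.1 l.2.2⟩))) hg2inj
    have hcmi := hyp π hπ m i j hi hj hsink hnon
    have hcmi' : entropy P (ε j) - entropy P (ε i)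
        < condEntropy P
            (fun ω =>
              fun l : {l : Fin d // (π.symm l ≤ m ∧ l ≠ j) ∧ ¬ Relation.TransGen E j l} =>
                V l.1 ω) (V j)
          - condEntropy P
              (fun ω =>
                ((fun l : {l : Fin d // (π.symm l ≤ m ∧ l ≠ j) ∧ ¬ Relation.TransGen E j l} =>
                    V l.1 ω),
                 (fun l : {l : Fin d // π.symm l ≤ m ∧ Relation.TransGen E j l} => V l.1 ω)))
              (V j) := hcmi
    linarith [hcmi', hre, hEi, hEj]
  refine ⟨parta, ?_⟩
  intro istar histar hmax l hl hEil
  have hsinkm : ∀ l', π.symm l' ≤ m → ¬ E (π m) l' := by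
    intro l' hl' hE
    have h1 : π.symm (π m) < π.symm l' := hπ _ _ (Relation.TransGen.single hE)
    rw [Equiv.symm_apply_apply] at h1
    exact absurd hl' (not_le.mpr h1)
  have hπm : π.symm (π m) ≤ m := le_of_eq (Equiv.symm_apply_apply π m)
  have hlt := parta (π m) istar hπm histar hsinkm ⟨l, hl, hEil⟩
  exact absurd (hmax (π m) hπm) (not_le.mpr hlt)
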